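/- Let a > 0 and b ∈ ℝ, set r = sqrt(a² + b²), and run n ≥ 1 steps of the CORDIC vectoring iteration from (x₀, y₀) = (a, b): d_k = 1 if y_k ≥ 0 else −1, x_{k+1} = x_k + d_k·2^{−k}·y_k, y_{k+1} = y_k − d_k·2^{−k}·x_k. Let K_n = ∏_{k=0}^{n−1} sqrt(1 + 2^{−2k}). Then 0 ≤ r − K_n^{−1}·x_n ≤ (1 − (1 + 4^{1−n})^{−1/2})·r, and in particular |K_n^{−1}·x_n − r| ≤ 2^{1−2n}·r. -/

import Mathlib

set_option maxHeartbeats 1600000 in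
/-- Pairwise CORDIC relative error bound: after `n ≥ 1` vectoring steps and scale
correction by `K_n⁻¹`, the output `x n` underestimates `r = sqrt(a² + b²)` by a
relative error at most `1 - (1 + 4^(1-n))^(-1/2) ≤ 2^(1-2n)`. -/
theorem cordic_pairwise_error_bound
    (a b : ℝ) (ha : 0 < a) (r : ℝ) (hr : r = Real.sqrt (a ^ 2 + b ^ 2))
    (x y : ℕ → ℝ) (hx0 : x 0 = a) (hy0 : y 0 = b)
    (d : ℕ → ℝ) (hd : ∀ k, d k = if 0 ≤ y k then 1 else -1)
    (hx : ∀ k, x (k + 1) = x k + d k * (2 : ℝ) ^ (-(k : ℤ)) * y k)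
    (hy : ∀ k, y (k + 1) = y k - d k * (2 : ℝ) ^ (-(k : ℤ)) * x k)
    (n : ℕ) (hn : 1 ≤ n)
    (Kn : ℝ) (hKn : Kn = ∏ k ∈ Finset.range n, Real.sqrt (1 + (2 : ℝ) ^ (-(2 * k : ℤ)))) :
    (0 ≤ r - Kn⁻¹ * x n ∧
      r - Kn⁻¹ * x n ≤ (1 - (1 + (4 : ℝ) ^ (1 - (n : ℤ))) ^ (-(1 / 2) : ℝ)) * r) ∧
    |Kn⁻¹ * x n - r| ≤ (2 : ℝ) ^ (1 - 2 * (n : ℤ)) * r := by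
  have hdy : ∀ k, d k * y k = |y k| := by
    intro k; rw [hd k]; split
    · rw [abs_of_nonneg ‹_›]; ring
    · rw [abs_of_neg (lt_of_not_ge ‹_›)]; ring
  have hd2 : ∀ k, d k ^ 2 = 1 := by
    intro k; rw [hd k]; split <;> norm_num
  -- positivity and monotonicity of x
  have hxpos : ∀ k, 0 < x k := by
    intro k; induction k with
    | zero => rw [hx0]; exact ha
    | succ k ih =>
      rw [hx k]
      have h1 : d k * (2 : ℝ) ^ (-(k : ℤ)) * y k = (2 : ℝ) ^ (-(k : ℤ)) * |y k| := by
        rw [← hdy k]; ring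
      rw [h1]
      have h2 : (0:ℝ) ≤ (2 : ℝ) ^ (-(k : ℤ)) * |y k| := by positivity
      linarith
  have hxstep : ∀ k, x (k + 1) = x k + (2 : ℝ) ^ (-(k : ℤ)) * |y k| := by
    intro k; rw [hx k, ← hdy k]; ring
  -- key: |y (k+1)| ≤ 2^(-k) * x (k+1)
  have key : ∀ k, |y (k + 1)| ≤ (2 : ℝ) ^ (-(k : ℤ)) * x (k + 1) := by
    intro k; induction k with
    | zero =>
      rw [hy 0, hx 0, hx0, hy0, hd 0, hy0]
      simp only [Nat.cast_zero, neg_zero, zpow_zero, one_mul, mul_one]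
      rcases le_or_gt 0 b with h | h
      · rw [if_pos h, abs_le]; constructor <;> linarith
      · rw [if_neg (not_le.mpr h), abs_le]; constructor <;> linarith
    | succ k ih =>
      have hc : ((k : ℤ) + 1) = ((k + 1 : ℕ) : ℤ) := by push_cast; ring
      set t : ℝ := (2 : ℝ) ^ (-((k + 1 : ℕ) : ℤ)) with ht
      have htpos : 0 < t := by positivity
      have ht2 : (2 : ℝ) ^ (-(k : ℤ)) = 2 * t := by
        rw [ht, ← hc, show -((k:ℤ)+1) = -(k:ℤ) + (-1) by ring, zpow_add₀ (two_ne_zero)]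
        norm_num; ring
      rw [ht2] at ih
      have hyabs : |y (k + 2)| = |(|y (k + 1)| - t * x (k + 1))| := by
        rw [hy (k + 1), hd (k + 1)]
        rcases le_or_gt 0 (y (k + 1)) with h | h
        · rw [if_pos h, abs_of_nonneg h, ← ht, one_mul]
        · rw [if_neg (not_le.mpr h), abs_of_neg h, ← ht,
            show y (k + 1) - -1 * t * x (k + 1) = -(-y (k + 1) - t * x (k + 1)) by ring,
            abs_neg]
      have hx2 := hxstep (k + 1)
      rw [← ht] at hx2
      rw [hyabs, abs_le]
      have hxp := hxpos (k + 1)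
      have hya := abs_nonneg (y (k + 1))
      have hprod : 0 ≤ t * t * |y (k + 1)| := by positivity
      constructor <;> nlinarith [hprod, hx2, ih]
  -- norm invariant
  have hnorm : ∀ k, x k ^ 2 + y k ^ 2 =
      (∏ j ∈ Finset.range k, (1 + (2 : ℝ) ^ (-(2 * j : ℤ)))) * (a ^ 2 + b ^ 2) := by
    intro k; induction k with
    | zero => simp [hx0, hy0]
    | succ k ih =>
      rw [Finset.prod_range_succ, hx k, hy k]
      have hsq : ((2 : ℝ) ^ (-(k : ℤ))) ^ 2 = (2 : ℝ) ^ (-(2 * k : ℤ)) := by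
        rw [← zpow_natCast (((2:ℝ)) ^ (-(k : ℤ))) 2, ← zpow_mul]
        norm_num; ring_nf
      have expand : (x k + d k * (2 : ℝ) ^ (-(k : ℤ)) * y k) ^ 2 +
          (y k - d k * (2 : ℝ) ^ (-(k : ℤ)) * x k) ^ 2 =
          (1 + ((2 : ℝ) ^ (-(k : ℤ))) ^ 2) * (x k ^ 2 + y k ^ 2) := by
        linear_combination ((2 : ℝ) ^ (-(k : ℤ))) ^ 2 * (x k ^ 2 + y k ^ 2) * hd2 k
      rw [expand, hsq, ih]; ring
  -- setup for final bounds
  obtain ⟨m, rfl⟩ : ∃ m, n = m + 1 := ⟨n - 1, by omega⟩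
  set P : ℝ := ∏ j ∈ Finset.range (m + 1), (1 + (2 : ℝ) ^ (-(2 * j : ℤ))) with hP
  have hPpos : 0 < P := Finset.prod_pos (fun j _ => by positivity)
  have hKpos : 0 < Kn := by
    rw [hKn]
    exact Finset.prod_pos (fun j _ => Real.sqrt_pos.mpr (by positivity))
  have hKsq : Kn ^ 2 = P := by
    rw [hKn, ← Finset.prod_pow]
    exact Finset.prod_congr rfl (fun j _ => Real.sq_sqrt (by positivity))
  have hr2 : r ^ 2 = a ^ 2 + b ^ 2 := by rw [hr]; exact Real.sq_sqrt (by positivity)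
  have hrpos : 0 < r := by rw [hr]; apply Real.sqrt_pos.mpr; positivity
  have hnorm' : x (m + 1) ^ 2 + y (m + 1) ^ 2 = (Kn * r) ^ 2 := by
    rw [hnorm (m + 1), ← hP, ← hr2, mul_pow, hKsq]
  have hxn := hxpos (m + 1)
  have hKr : 0 < Kn * r := mul_pos hKpos hrpos
  -- lower bound: x n ≤ Kn * r
  have hlow : x (m + 1) ≤ Kn * r := by nlinarith [sq_nonneg (y (m + 1))]
  have h1 : 0 ≤ r - Kn⁻¹ * x (m + 1) := by
    have hq : Kn⁻¹ * x (m + 1) ≤ r := by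
      rw [inv_mul_eq_div, div_le_iff₀ hKpos]
      linarith [hlow, mul_comm Kn r, mul_comm r Kn]
    linarith
  -- T = 4^(-m), the square of 2^(-m)
  set T : ℝ := (4 : ℝ) ^ (-(m : ℤ)) with hT
  have hTpos : 0 < T := by positivity
  have hTle : T ≤ 1 := by
    rw [hT]; apply zpow_le_one_of_nonpos₀ (by norm_num) (by omega)
  have hT4 : T = ((2 : ℝ) ^ (-(m : ℤ))) ^ 2 := by
    rw [hT, ← zpow_natCast ((2:ℝ) ^ (-(m : ℤ))) 2, ← zpow_mul,
      show (4:ℝ) = (2:ℝ) ^ (2:ℤ) by norm_num, ← zpow_mul]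
    ring_nf
  -- y n ^ 2 ≤ T * x n ^ 2
  have hysq : y (m + 1) ^ 2 ≤ T * x (m + 1) ^ 2 := by
    have := key m
    have h2 : |y (m + 1)| ^ 2 ≤ ((2 : ℝ) ^ (-(m : ℤ)) * x (m + 1)) ^ 2 :=
      pow_le_pow_left₀ (abs_nonneg _) this 2
    rw [sq_abs] at h2
    rw [hT4, ← mul_pow]; exact h2
  set S : ℝ := Real.sqrt (1 + T) with hS
  have hSpos : 0 < S := Real.sqrt_pos.mpr (by linarith)
  have hS2 : S ^ 2 = 1 + T := Real.sq_sqrt (by linarith)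
  have hS1 : 1 ≤ S := by nlinarith
  -- Kn * r ≤ x n * S
  have hxS : (x (m + 1) * S) ^ 2 = x (m + 1) ^ 2 * (1 + T) := by rw [mul_pow, hS2]
  have hup : Kn * r ≤ x (m + 1) * S := by
    have hsq : (Kn * r) ^ 2 ≤ (x (m + 1) * S) ^ 2 := by
      rw [hxS, ← hnorm']; nlinarith [hysq]
    calc Kn * r = Real.sqrt ((Kn * r) ^ 2) := (Real.sqrt_sq hKr.le).symm
      _ ≤ Real.sqrt ((x (m + 1) * S) ^ 2) := Real.sqrt_le_sqrt hsq
      _ = x (m + 1) * S := Real.sqrt_sq (mul_pos hxn hSpos).le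
  -- rpow equals 1/S
  have hrpow : (1 + (4 : ℝ) ^ (1 - ((m + 1 : ℕ) : ℤ))) ^ (-(1 / 2) : ℝ) = S⁻¹ := by
    have he : (1 : ℤ) - ((m + 1 : ℕ) : ℤ) = -(m : ℤ) := by push_cast; ring
    rw [he, ← hT, hS, Real.rpow_neg (by linarith), Real.sqrt_eq_rpow]
  have h2 : r - Kn⁻¹ * x (m + 1) ≤ (1 - S⁻¹) * r := by
    have hst : S⁻¹ * r ≤ Kn⁻¹ * x (m + 1) := by
      rw [inv_mul_eq_div, inv_mul_eq_div, div_le_div_iff₀ hSpos hKpos]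
      linarith [hup, mul_comm r Kn, mul_comm (x (m + 1)) S]
    have hre : (1 - S⁻¹) * r = r - S⁻¹ * r := by ring
    rw [hre]; linarith [hst]
  -- 1 - S⁻¹ ≤ T / 2
  have h3 : 1 - S⁻¹ ≤ T / 2 := by
    have hSle : S ≤ 1 + T / 2 := by
      rw [hS]
      calc Real.sqrt (1 + T) ≤ Real.sqrt ((1 + T / 2) ^ 2) :=
            Real.sqrt_le_sqrt (by nlinarith [sq_nonneg T])
        _ = 1 + T / 2 := Real.sqrt_sq (by linarith)
    have h4 : 1 - T / 2 ≤ S⁻¹ := by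
      rw [← one_div, le_div_iff₀ hSpos]
      nlinarith [mul_le_mul_of_nonneg_left hSle (show (0:ℝ) ≤ 1 - T / 2 by linarith),
        sq_nonneg T]
    linarith
  have hpow2 : (2 : ℝ) ^ (1 - 2 * ((m + 1 : ℕ) : ℤ)) = T / 2 := by
    have he : (1 : ℤ) - 2 * ((m + 1 : ℕ) : ℤ) = -(m:ℤ) + -(m:ℤ) + (-1) := by
      push_cast; ring
    rw [he, zpow_add₀ (two_ne_zero : (2:ℝ) ≠ 0), zpow_add₀ (two_ne_zero : (2:ℝ) ≠ 0),
      hT4, zpow_neg_one]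
    ring
  refine ⟨⟨h1, ?_⟩, ?_⟩
  · rw [hrpow]; exact h2
  · rw [abs_sub_comm, abs_of_nonneg h1, hpow2]
    calc r - Kn⁻¹ * x (m + 1) ≤ (1 - S⁻¹) * r := h2
      _ ≤ T / 2 * r := by nlinarith
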